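/- (Decoding theorem) Let C be a binary code with error-correcting capability t and reduced basis G w.r.t. <_e. For any word w ∈ [X]: if weight(ψ(Can(w,G))) ≤ t then ψ(Can(w,G)) is the unique error vector of ψ(w), i.e., ψ(w) − ψ(Can(w,G)) ∈ C and weight(ψ(Can(w,G))) ≤ t; and if weight(ψ(Can(w,G))) > t then ψ(w) is at distance > t from every codeword. -/

import Mathlib

/-- `[X]` is the free commutative monoid on `x_1, …, x_n`. -/
abbrev BWord (n : ℕ) := Multiset (Fin n)

/-- `ψ : [X] → F_2^n`. -/
def psi {n : ℕ} (w : BWord n) : Fin n → ZMod 2 := fun i => (w.count i : ZMod 2)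

/-- A standard word: a squarefree monomial. -/
def Std {n : ℕ} (w : BWord n) : Prop := ∀ i : Fin n, w.count i ≤ 1

/-- The standard form of a word (exponents reduced mod 2 via `x_i² → 1`). -/
def stdW {n : ℕ} (w : BWord n) : BWord n :=
  (w.toFinset.filter fun i => w.count i % 2 = 1).val

/-- One-step reduction modulo the basis `G`. -/
def Red {n : ℕ} (G : Set (BWord n × BWord n)) (w w₁ : BWord n) : Prop :=
  (¬ Std w ∧ w₁ = stdW w) ∨
  (Std w ∧ ∃ g ∈ G, g.1 ≤ w ∧ w₁ = w - g.1 + g.2)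

lemma psi_stdW {n : ℕ} (w : BWord n) : psi (stdW w) = psi w := by
  funext i
  simp only [psi, stdW]
  rw [show (w.count i : ZMod 2) = ((w.count i % 2 : ℕ) : ZMod 2) from (ZMod.natCast_mod _ 2).symm]
  by_cases h : i ∈ w.toFinset.filter fun i => w.count i % 2 = 1
  · rw [Multiset.count_eq_one_of_mem (Finset.filter _ _).nodup h]
    have := (Finset.mem_filter.mp h).2
    simp [this]
  · rw [Multiset.count_eq_zero_of_notMem h]
    have : w.count i % 2 = 0 := by
      rcases Nat.mod_two_eq_zero_or_one (w.count i) with h2 | h2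
      · exact h2
      · by_cases hm : i ∈ w.toFinset
        · exact absurd (Finset.mem_filter.mpr ⟨hm, h2⟩) h
        · simp [Multiset.count_eq_zero_of_notMem (fun hh => hm (Multiset.mem_toFinset.mpr hh))]
    simp [this]

lemma psi_sub_add {n : ℕ} (w a b : BWord n) (h : a ≤ w) :
    psi (w - a + b) = psi w - psi a + psi b := by
  funext i
  simp only [psi, Pi.add_apply, Pi.sub_apply, Multiset.count_add, Multiset.count_sub]
  rw [Nat.cast_add, Nat.cast_sub (Multiset.le_iff_count.mp h i)]

lemma red_coset {n : ℕ} (C : Submodule (ZMod 2) (Fin n → ZMod 2))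
    (G : Set (BWord n × BWord n)) (hG : ∀ g ∈ G, psi g.1 - psi g.2 ∈ C)
    {w w₁ : BWord n} (h : Red G w w₁) : psi w - psi w₁ ∈ C := by
  rcases h with ⟨_, rfl⟩ | ⟨_, g, hg, hle, rfl⟩
  · rw [psi_stdW, sub_self]; exact C.zero_mem
  · rw [psi_sub_add _ _ _ hle]
    have : psi w - (psi w - psi g.1 + psi g.2) = psi g.1 - psi g.2 := by ring
    rw [this]; exact hG g hg

lemma rtg_coset {n : ℕ} (C : Submodule (ZMod 2) (Fin n → ZMod 2))
    (G : Set (BWord n × BWord n)) (hG : ∀ g ∈ G, psi g.1 - psi g.2 ∈ C)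
    {w w₁ : BWord n} (h : Relation.ReflTransGen (Red G) w w₁) :
    psi w - psi w₁ ∈ C := by
  induction h with
  | refl => rw [sub_self]; exact C.zero_mem
  | tail _ hbc ih =>
      have := C.add_mem ih (red_coset C G hG hbc)
      simpa using this

theorem stmt16 {n d t : ℕ} (C : Submodule (ZMod 2) (Fin n → ZMod 2))
    (hd : IsLeast {w : ℕ | ∃ c ∈ C, c ≠ 0 ∧ hammingNorm c = w} d)
    (ht : t = (d - 1) / 2)
    (G : Set (BWord n × BWord n))
    (hG : ∀ g ∈ G, psi g.1 - psi g.2 ∈ C)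
    (can : BWord n → BWord n)
    (hcan : ∀ w : BWord n, Relation.ReflTransGen (Red G) w (can w) ∧
      ∀ w₁, ¬ Red G (can w) w₁)
    (hN5 : ∀ w : BWord n, (∀ w₁, ¬ Red G w w₁) →
      (∃ c ∈ C, hammingDist c (psi w) ≤ t) → hammingNorm (psi w) ≤ t)
    (w : BWord n) :
    (hammingNorm (psi (can w)) ≤ t →
      psi w - psi (can w) ∈ C ∧
      ∀ e : Fin n → ZMod 2, hammingNorm e ≤ t → psi w - e ∈ C → e = psi (can w)) ∧
    (t < hammingNorm (psi (can w)) → ∀ c ∈ C, t < hammingDist c (psi w)) := by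
  have hmem : psi w - psi (can w) ∈ C := rtg_coset C G hG (hcan w).1
  -- d ≥ 1
  obtain ⟨c₀, hc₀C, hc₀ne, hc₀norm⟩ := hd.1
  have hd1 : 1 ≤ d := by
    rcases Nat.eq_zero_or_pos d with h0 | h1
    · exfalso; apply hc₀ne
      have : hammingNorm c₀ = 0 := by rw [hc₀norm, h0]
      exact hammingNorm_eq_zero.mp this
    · exact h1
  have h2t : 2 * t < d := by
    have : 2 * ((d - 1) / 2) ≤ d - 1 := by
      rw [Nat.mul_comm]; exact Nat.div_mul_le_self _ _
    omega
  constructor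
  · intro hle
    refine ⟨hmem, fun e he heC => ?_⟩
    by_contra hne
    have hdiff : e - psi (can w) ∈ C := by
      have := C.sub_mem heC hmem
      have heq : psi w - e - (psi w - psi (can w)) = -(e - psi (can w)) := by ring
      rw [heq] at this
      simpa using C.neg_mem this
    have hne0 : e - psi (can w) ≠ 0 := fun h => hne (by
      have := sub_eq_zero.mp h; exact this)
    have hdlb : d ≤ hammingNorm (e - psi (can w)) :=
      hd.2 ⟨e - psi (can w), hdiff, hne0, rfl⟩
    have hub : hammingNorm (e - psi (can w)) ≤ t + t := by
      rw [show e - psi (can w) = -psi (can w) + e by abel, ← hammingDist_eq_hammingNorm, hammingDist_comm]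
      calc hammingDist e (psi (can w)) ≤ hammingDist e 0 + hammingDist 0 (psi (can w)) :=
            hammingDist_triangle _ _ _
        _ = hammingNorm e + hammingNorm (psi (can w)) := by
            rw [hammingDist_zero_right, hammingDist_zero_left]
        _ ≤ t + t := Nat.add_le_add he hle
    omega
  · intro hgt c hcC
    by_contra hle
    push_neg at hle
    apply Nat.not_le.mpr hgt
    apply hN5 (can w) (hcan w).2
    refine ⟨c - (psi w - psi (can w)), C.sub_mem hcC hmem, ?_⟩
    rw [hammingDist_eq_hammingNorm]
    have heq : -(c - (psi w - psi (can w))) + psi (can w) = -c + psi w := by ring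
    rw [heq, ← hammingDist_eq_hammingNorm]
    exact hle
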